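/- Let g : ℝᵐ → ℝ be differentiable with L-Lipschitz gradient (L > 0), bounded below with infimum g*, and Δ_g ≥ g(θ₀) − g*. Given ε > 0, suppose θ_{t+1} = θ_t − (1/L) G_t for t = 0, …, T−1 with ‖G_t − ∇g(θ_t)‖ ≤ ε/4 for all t, and T ≥ 18LΔ_g/ε². Then there exists t ∈ {0, 1, …, T−1} such that ‖∇g(θ_t)‖ ≤ (5/12)ε. -/

import Mathlib

set_option maxHeartbeats 1000000

open InnerProductSpace Set

lemma descent_lemma {m : ℕ} (g : EuclideanSpace ℝ (Fin m) → ℝ) (L : ℝ)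
    (hdiff : Differentiable ℝ g)
    (hsmooth : ∀ x y, ‖gradient g x - gradient g y‖ ≤ L * ‖x - y‖)
    (x y : EuclideanSpace ℝ (Fin m)) :
    g y ≤ g x + inner ℝ (gradient g x) (y - x) + L / 2 * ‖y - x‖ ^ 2 := by
  set v := y - x with hv
  set k : ℝ := inner ℝ (gradient g x) v with hk
  set f : ℝ → ℝ := fun t => g (x + t • v) - g x - t * k with hf
  have hc : ∀ t : ℝ, HasDerivAt (fun t : ℝ => x + t • v) v t := by
    intro t
    simpa using ((hasDerivAt_id t).smul_const v).const_add x
  have hder : ∀ t : ℝ, HasDerivAt f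
      ((inner ℝ (gradient g (x + t • v) - gradient g x) v : ℝ)) t := by
    intro t
    have hg : HasDerivAt (fun t : ℝ => g (x + t • v))
        ((inner ℝ (gradient g (x + t • v)) v : ℝ)) t := by
      have h1 := (hdiff (x + t • v)).hasGradientAt.hasFDerivAt
      have := h1.comp_hasDerivAt t (hc t)
      simpa [Function.comp_def, InnerProductSpace.toDual_apply_apply] using this
    have := (hg.sub_const (g x)).sub ((hasDerivAt_id t).mul_const k)
    simpa [inner_sub_left, hk, hf, Pi.sub_def] using this
  have key : ∀ z ∈ Icc (0:ℝ) 1, ‖f z‖ ≤ L / 2 * ‖v‖ ^ 2 * z ^ 2 := by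
    apply image_norm_le_of_norm_deriv_right_le_deriv_boundary
      (f' := fun t => (inner ℝ (gradient g (x + t • v) - gradient g x) v : ℝ))
      (B := fun t => L / 2 * ‖v‖ ^ 2 * t ^ 2) (B' := fun t => L * ‖v‖ ^ 2 * t)
    case hf =>
      intro t ht
      exact (hder t).continuousAt.continuousWithinAt
    case hf' =>
      intro t ht
      exact (hder t).hasDerivWithinAt
    case ha => simp [hf]
    case hB =>
      intro t
      have h3 : HasDerivAt (fun t : ℝ => L / 2 * ‖v‖ ^ 2 * t ^ 2)
          (L / 2 * ‖v‖ ^ 2 * (2 * t)) t := by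
        simpa using (hasDerivAt_pow 2 t).const_mul (L / 2 * ‖v‖ ^ 2)
      convert h3 using 1; ring
    case bound =>
      intro t ht
      have ht0 : (0:ℝ) ≤ t := ht.1
      show ‖(inner ℝ (gradient g (x + t • v) - gradient g x) v : ℝ)‖ ≤ L * ‖v‖ ^ 2 * t
      calc ‖(inner ℝ (gradient g (x + t • v) - gradient g x) v : ℝ)‖
          ≤ ‖gradient g (x + t • v) - gradient g x‖ * ‖v‖ := norm_inner_le_norm _ _
        _ ≤ (L * ‖x + t • v - x‖) * ‖v‖ := by
            gcongr; exact hsmooth _ _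
        _ = L * ‖v‖ ^ 2 * t := by
            have h4 : ‖x + t • v - x‖ = t * ‖v‖ := by
              simp [norm_smul, abs_of_nonneg ht0]
            rw [h4]; ring
  have h1 := key 1 (by norm_num)
  have h2 : f 1 ≤ L / 2 * ‖v‖ ^ 2 := by
    calc f 1 ≤ ‖f 1‖ := le_abs_self _
      _ ≤ L / 2 * ‖v‖ ^ 2 * 1 ^ 2 := h1
      _ = L / 2 * ‖v‖ ^ 2 := by ring
  have h5 : g (x + (1:ℝ) • v) - g x - 1 * k ≤ L / 2 * ‖v‖ ^ 2 := h2
  simp only [one_smul, one_mul] at h5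
  have hxy : x + v = y := by rw [hv]; abel
  rw [hxy] at h5
  linarith



/-- Lemma 3: inexact gradient descent with error at most `ε/4` per step finds, within
`T ≥ 18LΔ_g/ε²` iterations, a point with `‖∇g(θ_t)‖ ≤ (5/12)ε`. -/
theorem inexact_gradient_descent_finds_stationary
    (m : ℕ) (g : EuclideanSpace ℝ (Fin m) → ℝ) (L gstar Δg ε : ℝ)
    (hL : 0 < L) (hε : 0 < ε)
    (hdiff : Differentiable ℝ g)
    (hsmooth : ∀ x y, ‖gradient g x - gradient g y‖ ≤ L * ‖x - y‖)
    (hlb : ∀ x, gstar ≤ g x)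
    (θ : ℕ → EuclideanSpace ℝ (Fin m)) (G : ℕ → EuclideanSpace ℝ (Fin m))
    (hinit : g (θ 0) - gstar ≤ Δg)
    (herr : ∀ t, ‖G t - gradient g (θ t)‖ ≤ ε / 4)
    (hiter : ∀ t, θ (t + 1) = θ t - (1 / L) • G t)
    (T : ℕ) (hT : (T : ℝ) ≥ 18 * L * Δg / ε ^ 2) (hTpos : 0 < T) :
    ∃ t < T, ‖gradient g (θ t)‖ ≤ (5 / 12) * ε := by
  by_contra hcon
  push_neg at hcon
  set c : ℝ := ε ^ 2 / (18 * L) with hc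
  have step : ∀ t, t < T → g (θ (t + 1)) + c < g (θ t) := by
    intro t ht
    have hdesc := descent_lemma g L hdiff hsmooth (θ t) (θ (t + 1))
    set x := θ t
    set d := gradient g x with hd
    have hsub : θ (t + 1) - x = -((1 / L) • G t) := by
      rw [hiter t]; abel
    have hn : ‖θ (t + 1) - x‖ ^ 2 = (1 / L) ^ 2 * ‖G t‖ ^ 2 := by
      rw [hsub, norm_neg, norm_smul]
      simp [abs_of_pos (one_div_pos.2 hL), mul_pow]
    have hip : (inner ℝ d (θ (t + 1) - x) : ℝ) = -(1 / L) * inner ℝ (G t) d := by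
      rw [hsub, inner_neg_right, inner_smul_right, real_inner_comm]; ring
    -- key algebraic identity
    have hid : ‖G t - d‖ ^ 2 = ‖G t‖ ^ 2 - 2 * inner ℝ (G t) d + ‖d‖ ^ 2 :=
      norm_sub_sq_real _ _
    have herr2 : ‖G t - d‖ ^ 2 ≤ (ε / 4) ^ 2 := by
      have := herr t
      have h0 : (0:ℝ) ≤ ‖G t - d‖ := norm_nonneg _
      nlinarith
    have hg2 : (5 / 12 * ε) ^ 2 < ‖d‖ ^ 2 := by
      have := hcon t ht
      nlinarith [norm_nonneg d]
    have hbound : g (θ (t + 1)) ≤ g x + 1 / (2 * L) * (‖G t - d‖ ^ 2 - ‖d‖ ^ 2) := by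
      have : g x + (inner ℝ d (θ (t + 1) - x) : ℝ) + L / 2 * ‖θ (t + 1) - x‖ ^ 2
          = g x + 1 / (2 * L) * (‖G t - d‖ ^ 2 - ‖d‖ ^ 2) := by
        rw [hip, hn, hid]
        field_simp
        ring
      linarith [hdesc, this.le]
    have hmargin : 1 / (2 * L) * (‖G t - d‖ ^ 2 - ‖d‖ ^ 2) < -c := by
      have hL2 : (0:ℝ) < 1 / (2 * L) := by positivity
      have : ‖G t - d‖ ^ 2 - ‖d‖ ^ 2 < -(ε ^ 2 * (8 / 72)) := by nlinarith
      calc 1 / (2 * L) * (‖G t - d‖ ^ 2 - ‖d‖ ^ 2)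
          < 1 / (2 * L) * (-(ε ^ 2 * (8 / 72))) := by
            exact (mul_lt_mul_iff_right₀ hL2).2 this
        _ = -c := by rw [hc]; field_simp; ring
    linarith
  have key : ∀ n, n ≤ T → g (θ n) + n * c ≤ g (θ 0) := by
    intro n
    induction n with
    | zero => intro _; simp
    | succ k ih =>
      intro hk
      have hk' : k ≤ T := Nat.le_of_succ_le hk
      have := step k (Nat.lt_of_succ_le hk)
      have := ih hk'
      push_cast
      linarith
  have hstrict : g (θ T) + T * c < g (θ 0) := by
    have h1 := step (T - 1) (Nat.sub_lt hTpos Nat.one_pos)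
    have h2 := key (T - 1) (Nat.sub_le _ _)
    have hTe : T - 1 + 1 = T := Nat.succ_pred_eq_of_pos hTpos
    rw [hTe] at h1
    have hcast : ((T - 1 : ℕ) : ℝ) = (T : ℝ) - 1 := by
      push_cast [Nat.cast_sub hTpos]; ring
    rw [hcast] at h2
    nlinarith
  have hTc : Δg ≤ (T : ℝ) * c := by
    have h18 : (0:ℝ) < 18 * L := by positivity
    have hε2 : (0:ℝ) < ε ^ 2 := by positivity
    have hT' : 18 * L * Δg ≤ (T : ℝ) * ε ^ 2 := by
      rw [ge_iff_le, div_le_iff₀ hε2] at hT; linarith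
    have h6 : Δg ≤ (T : ℝ) * ε ^ 2 / (18 * L) := by
      rw [le_div_iff₀ h18]; linarith
    calc Δg ≤ (T : ℝ) * ε ^ 2 / (18 * L) := h6
      _ = (T : ℝ) * c := by rw [hc]; ring
  have := hlb (θ T)
  linarith
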